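/- Let A ⊆ ℝ^d be a proper linear subspace, let P ⊆ A and Q ⊆ A^⊥ be nonempty finite sets, let x be the minimum norm point of the affine hull of P, let y be the minimum norm point of the affine hull of Q, and let z be the minimum norm point of the affine hull of P ∪ Q. If x ≠ 0 and y ≠ 0, then z is a strict convex combination of x and y, i.e., z = λ·x + (1 − λ)·y for some λ with 0 < λ < 1. -/
import Mathlib


open InnerProductSpace

open RealInnerProductSpace in
/-- The minimum-norm point of an affine subspace is orthogonal to its direction. -/
lemma minnorm_orth {E : Type*} [NormedAddCommGroup E] [InnerProductSpace ℝ E]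
    (S : AffineSubspace ℝ E) (z : E) (hz : z ∈ S) (hmin : ∀ w ∈ S, ‖z‖ ≤ ‖w‖) :
    ∀ v ∈ S.direction, ⟪z, v⟫ = 0 := by
  intro v hv
  by_contra hc
  have hv0 : v ≠ 0 := by rintro rfl; exact hc (inner_zero_right z)
  set c : ℝ := ⟪z, v⟫ with hcdef
  set t : ℝ := -c / ‖v‖ ^ 2 with htdef
  have hw : t • v +ᵥ z ∈ S :=
    AffineSubspace.vadd_mem_of_mem_direction (S.direction.smul_mem t hv) hz
  have hle := hmin _ hw
  have hvpos : (0:ℝ) < ‖v‖ ^ 2 := pow_pos (norm_pos_iff.mpr hv0) 2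
  have hcne : c ≠ 0 := hc
  have hnormsq : ‖t • v +ᵥ z‖ ^ 2 = ‖z‖ ^ 2 + 2 * t * c + t ^ 2 * ‖v‖ ^ 2 := by
    have h1 : (t • v +ᵥ z) = z + t • v := by
      simp [vadd_eq_add, add_comm]
    rw [h1, @norm_add_sq_real, real_inner_smul_right, ← hcdef, norm_smul,
      Real.norm_eq_abs, mul_pow, sq_abs]
    ring
  have harith : 2 * t * c + t ^ 2 * ‖v‖ ^ 2 = -(c ^ 2 / ‖v‖ ^ 2) := by
    rw [htdef]; field_simp; ring
  have hlt : ‖t • v +ᵥ z‖ ^ 2 < ‖z‖ ^ 2 := by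
    rw [hnormsq]
    have hc2 : (0:ℝ) < c ^ 2 := lt_of_le_of_ne (sq_nonneg c) (Ne.symm (pow_ne_zero 2 hcne))
    have : 0 < c ^ 2 / ‖v‖ ^ 2 := div_pos hc2 hvpos
    linarith [harith]
  have : ‖z‖ ^ 2 ≤ ‖t • v +ᵥ z‖ ^ 2 := by
    have h1 : (0:ℝ) ≤ ‖z‖ := norm_nonneg _
    nlinarith [hle]
  linarith

open RealInnerProductSpace in
/-- Orthogonal decomposition lemma, part 2: if `P ⊆ A`, `Q ⊆ A^⊥` with `x, y, z` the minimum
norm points of `aff P`, `aff Q`, `aff (P ∪ Q)` respectively, and `x ≠ 0`, `y ≠ 0`, then `z` is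
a strict convex combination of `x` and `y`. -/
theorem stmt_4 (d : ℕ) (A : Submodule ℝ (EuclideanSpace ℝ (Fin d))) (hA : A ≠ ⊤)
    (P Q : Set (EuclideanSpace ℝ (Fin d)))
    (hPfin : P.Finite) (hPne : P.Nonempty) (hPA : P ⊆ (A : Set (EuclideanSpace ℝ (Fin d))))
    (hQfin : Q.Finite) (hQne : Q.Nonempty) (hQA : Q ⊆ (Aᗮ : Set (EuclideanSpace ℝ (Fin d))))
    (x y z : EuclideanSpace ℝ (Fin d))
    (hxmem : x ∈ affineSpan ℝ P) (hxmin : ∀ w ∈ affineSpan ℝ P, ‖x‖ ≤ ‖w‖)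
    (hymem : y ∈ affineSpan ℝ Q) (hymin : ∀ w ∈ affineSpan ℝ Q, ‖y‖ ≤ ‖w‖)
    (hzmem : z ∈ affineSpan ℝ (P ∪ Q)) (hzmin : ∀ w ∈ affineSpan ℝ (P ∪ Q), ‖z‖ ≤ ‖w‖)
    (hx0 : x ≠ 0) (hy0 : y ≠ 0) :
    ∃ lam : ℝ, 0 < lam ∧ lam < 1 ∧ z = lam • x + (1 - lam) • y := by
  have hnx : (0:ℝ) < ‖x‖ ^ 2 := pow_pos (norm_pos_iff.mpr hx0) 2
  have hny : (0:ℝ) < ‖y‖ ^ 2 := pow_pos (norm_pos_iff.mpr hy0) 2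
  have hsum : (0:ℝ) < ‖x‖ ^ 2 + ‖y‖ ^ 2 := by linarith
  set lam : ℝ := ‖y‖ ^ 2 / (‖x‖ ^ 2 + ‖y‖ ^ 2) with hlam
  have hlam_pos : 0 < lam := div_pos hny hsum
  have hlam_lt : lam < 1 := by
    rw [hlam, div_lt_one hsum]; linarith
  -- key scalar identity
  have hkey : lam * ‖x‖ ^ 2 = (1 - lam) * ‖y‖ ^ 2 := by
    rw [hlam]; field_simp; ring
  -- memberships in A and Aᗮ
  have hxA : x ∈ A := by
    have h := affineSpan_le.mpr (show P ⊆ (A.toAffineSubspace : Set _) from hPA)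
    exact Submodule.mem_toAffineSubspace.mp (h hxmem)
  have hyA : y ∈ Aᗮ := by
    have h := affineSpan_le.mpr (show Q ⊆ ((Aᗮ).toAffineSubspace : Set _) from hQA)
    exact Submodule.mem_toAffineSubspace.mp (h hymem)
  -- orthogonality of x and y to their directions
  have hxorth := minnorm_orth _ x hxmem hxmin
  have hyorth := minnorm_orth _ y hymem hymin
  have hzorth := minnorm_orth _ z hzmem hzmin
  -- the candidate point
  set w : EuclideanSpace ℝ (Fin d) := lam • x + (1 - lam) • y with hw
  -- ⟪w, a⟫ is the same constant for every a ∈ P ∪ Q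
  have hconst : ∀ a ∈ P ∪ Q, ⟪w, a⟫ = lam * ‖x‖ ^ 2 := by
    rintro a (ha | ha)
    · have hxa : ⟪x, a⟫ = ‖x‖ ^ 2 := by
        have h1 : ⟪x, a - x⟫ = 0 := hxorth _
          (AffineSubspace.vsub_mem_direction (mem_affineSpan ℝ ha) hxmem)
        rw [inner_sub_right, real_inner_self_eq_norm_sq] at h1
        linarith
      have hya : ⟪y, a⟫ = 0 := by
        have := hyA a (hPA ha)
        rwa [real_inner_comm] at this
      rw [hw, inner_add_left, real_inner_smul_left, real_inner_smul_left, hxa, hya]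
      ring
    · have hya : ⟪y, a⟫ = ‖y‖ ^ 2 := by
        have h1 : ⟪y, a - y⟫ = 0 := hyorth _
          (AffineSubspace.vsub_mem_direction (mem_affineSpan ℝ ha) hymem)
        rw [inner_sub_right, real_inner_self_eq_norm_sq] at h1
        linarith
      have hxa : ⟪x, a⟫ = 0 := by
        have := hQA ha
        exact this x hxA
      rw [hw, inner_add_left, real_inner_smul_left, real_inner_smul_left, hxa, hya]
      rw [hkey]; ring
  -- w is orthogonal to the direction of affineSpan (P ∪ Q)
  have hworth : ∀ v ∈ (affineSpan ℝ (P ∪ Q)).direction, ⟪w, v⟫ = 0 := by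
    intro v hv
    rw [direction_affineSpan, vectorSpan_def] at hv
    induction hv using Submodule.span_induction with
    | mem u hu =>
      obtain ⟨a, ha, b, hb, rfl⟩ := hu
      show ⟪w, a - b⟫ = 0
      rw [inner_sub_right, hconst a ha, hconst b hb]
      ring
    | zero => exact inner_zero_right w
    | add u v hu hv ihu ihv => rw [inner_add_right, ihu, ihv]; ring
    | smul c u hu ihu => rw [real_inner_smul_right, ihu]; ring
  -- w is in affineSpan (P ∪ Q)
  have hxmem' : x ∈ affineSpan ℝ (P ∪ Q) :=
    affineSpan_mono ℝ Set.subset_union_left hxmem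
  have hymem' : y ∈ affineSpan ℝ (P ∪ Q) :=
    affineSpan_mono ℝ Set.subset_union_right hymem
  have hwmem : w ∈ affineSpan ℝ (P ∪ Q) := by
    have h := (affineSpan ℝ (P ∪ Q)).smul_vsub_vadd_mem lam hxmem' hymem' hymem'
    have : lam • (x -ᵥ y) +ᵥ y = w := by
      rw [hw, vsub_eq_sub, vadd_eq_add]
      module
    rwa [this] at h
  -- z = w by uniqueness of the orthogonal point
  have hzw : z = w := by
    have hd : z - w ∈ (affineSpan ℝ (P ∪ Q)).direction := by
      have := AffineSubspace.vsub_mem_direction hzmem hwmem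
      rwa [vsub_eq_sub] at this
    have h1 : ⟪z, z - w⟫ = 0 := hzorth _ hd
    have h2 : ⟪w, z - w⟫ = 0 := hworth _ hd
    have h3 : ⟪z - w, z - w⟫ = 0 := by
      rw [inner_sub_left, h1, h2]; ring
    have := inner_self_eq_zero.mp h3
    exact sub_eq_zero.mp this
  exact ⟨lam, hlam_pos, hlam_lt, hzw⟩
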